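/- Define I₂ : ℝ → ℝ → ℝ → ℝ by I₂(q, q', θ) := (1−q)·q'·(sin²θ·Real.logb 2 (sin²θ) + cos²θ·Real.logb 2 (cos²θ / 2)) + q·(1−q')·(cos²θ·Real.logb 2 (cos²θ) + sin²θ·Real.logb 2 (sin²θ / 2)) − q·q'·h₂((1 + sin(2θ))/2) − ξ·Real.logb 2 ξ − 2·η·Real.logb 2 η, where ξ := 1 − q'·cos²θ − q·sin²θ and η := (q'·cos²θ + q·sin²θ)/2. Then I₂(0.9197, 0.9197, π/4) > 1.10. -/

import Mathlib

/-- The binary entropy function (in bits), with the convention `Real.logb 2 0 = 0`. -/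
noncomputable def h2 (x : ℝ) : ℝ := -x * Real.logb 2 x - (1 - x) * Real.logb 2 (1 - x)

/-- Accessible information of the two-sender unassisted protocol with source state
`cos θ|e₁⟩ + sin θ|e₂⟩`, sender 1 blocking with probability 1−q and sender 2 using
the ternary encoding with phase weight q'. -/
noncomputable def I2 (q q' θ : ℝ) : ℝ :=
  (1 - q) * q' * (Real.sin θ ^ 2 * Real.logb 2 (Real.sin θ ^ 2)
      + Real.cos θ ^ 2 * Real.logb 2 (Real.cos θ ^ 2 / 2))
    + q * (1 - q') * (Real.cos θ ^ 2 * Real.logb 2 (Real.cos θ ^ 2)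
      + Real.sin θ ^ 2 * Real.logb 2 (Real.sin θ ^ 2 / 2))
    - q * q' * h2 ((1 + Real.sin (2 * θ)) / 2)
    - (1 - q' * Real.cos θ ^ 2 - q * Real.sin θ ^ 2) *
        Real.logb 2 (1 - q' * Real.cos θ ^ 2 - q * Real.sin θ ^ 2)
    - 2 * ((q' * Real.cos θ ^ 2 + q * Real.sin θ ^ 2) / 2) *
        Real.logb 2 ((q' * Real.cos θ ^ 2 + q * Real.sin θ ^ 2) / 2)

/-- The two-sender unassisted protocol at the optimal parameters
`q = q' = 0.9197`, `θ = π/4` beats the classical 1-bit limit: `R(𝒬₂) ≥ 1.1014 > 1.10`. -/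
theorem two_sender_unassisted_beats_one_bit :
    I2 0.9197 0.9197 (Real.pi / 4) > 1.10 := by
  have hs : Real.sin (Real.pi / 4) ^ 2 = 1 / 2 := by
    rw [Real.sin_pi_div_four, div_pow, Real.sq_sqrt (by norm_num : (0:ℝ) ≤ 2)]; norm_num
  have hc : Real.cos (Real.pi / 4) ^ 2 = 1 / 2 := by
    rw [Real.cos_pi_div_four, div_pow, Real.sq_sqrt (by norm_num : (0:ℝ) ≤ 2)]; norm_num
  have hs2 : Real.sin (2 * (Real.pi / 4)) = 1 := by
    rw [show 2 * (Real.pi / 4) = Real.pi / 2 by ring, Real.sin_pi_div_two]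
  rw [I2, hs, hc, hs2]
  have hh : h2 ((1 + 1) / 2) = 0 := by norm_num [h2]
  rw [hh]
  have hL : 0 < Real.log 2 := Real.log_pos (by norm_num)
  have l1 : Real.logb 2 (1 / 2 : ℝ) = -1 := by
    rw [show (1/2 : ℝ) = 2⁻¹ by norm_num, Real.logb, Real.log_inv]; field_simp
  have l2 : Real.logb 2 (1 / 2 / 2 : ℝ) = -2 := by
    rw [show (1/2/2 : ℝ) = ((2:ℝ)^2)⁻¹ by norm_num, Real.logb, Real.log_inv, Real.log_pow]
    field_simp
    norm_num
  rw [l1, l2]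
  rw [show (1 - 0.9197 * (1/2) - 0.9197 * (1/2) : ℝ) = 0.0803 from by norm_num]
  rw [show ((0.9197 * (1/2) + 0.9197 * (1/2)) / 2 : ℝ) = 0.45985 from by norm_num]
  have l3 : Real.logb 2 (0.0803 : ℝ) = (Real.log 1.2848 - 4 * Real.log 2) / Real.log 2 := by
    rw [Real.logb, show (0.0803 : ℝ) = 1.2848 / 2 ^ 4 by norm_num,
      Real.log_div (by norm_num) (by norm_num), Real.log_pow]
    norm_num
  have l4 : Real.logb 2 (0.45985 : ℝ) = (Real.log 0.9197 - Real.log 2) / Real.log 2 := by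
    rw [Real.logb, show (0.45985 : ℝ) = 0.9197 / 2 by norm_num,
      Real.log_div (by norm_num) (by norm_num)]
  rw [l3, l4]
  have hu : Real.log 1.2848 < 0.2507 := by
    rw [Real.log_lt_iff_lt_exp (by norm_num)]
    refine lt_of_lt_of_le ?_ (Real.sum_le_exp_of_nonneg (x := 0.2507) (by norm_num) 5)
    rw [Finset.sum_range_succ, Finset.sum_range_succ, Finset.sum_range_succ,
      Finset.sum_range_succ, Finset.sum_range_one]
    norm_num [Nat.factorial]
  have ha : Real.log 0.9197 < -0.08369 := by
    rw [Real.log_lt_iff_lt_exp (by norm_num)]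
    have hb := Real.exp_bound' (x := 0.08369) (by norm_num) (by norm_num) (n := 4) (by norm_num)
    rw [Finset.sum_range_succ, Finset.sum_range_succ, Finset.sum_range_succ,
      Finset.sum_range_one] at hb
    norm_num [Nat.factorial] at hb
    have he : Real.exp 0.08369 < 1 / 0.9197 := by norm_num at hb ⊢; nlinarith [hb]
    have hp := Real.exp_pos (0.08369 : ℝ)
    rw [show (-0.08369 : ℝ) = -(0.08369) by norm_num, Real.exp_neg]
    have h1 : Real.exp 0.08369 * (Real.exp 0.08369)⁻¹ = 1 := mul_inv_cancel₀ hp.ne'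
    nlinarith [he, hp, h1]
  have hl2 : Real.log 2 < 0.6931471808 := Real.log_two_lt_d9
  have hkey : 0 < -0.0803 * Real.log 1.2848 - 0.9197 * Real.log 0.9197
      - 0.08065573 * Real.log 2 := by nlinarith [hu, ha, hl2, hL]
  have hinv : Real.log 2 * (Real.log 2)⁻¹ = 1 := mul_inv_cancel₀ hL.ne'
  have h5 : 0 < (-0.0803 * Real.log 1.2848 - 0.9197 * Real.log 0.9197
      - 0.08065573 * Real.log 2) * (Real.log 2)⁻¹ := mul_pos hkey (inv_pos.mpr hL)
  simp only [div_eq_mul_inv]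
  nlinarith [h5, hinv]
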